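/- Let A be a nonempty finite set, T ≥ 1 a natural number, and S⁽¹⁾, …, S⁽ᵀ⁾ ⊆ A arbitrary subsets. For t ∈ {1, …, T} and a ∈ A, define N⁽ᵗ⁾(a) = #{ s ∈ {1, …, t} : a ∈ S⁽ˢ⁾ } (so N⁽ᵗ⁾(a) ≥ 1 whenever a ∈ S⁽ᵗ⁾). Then Σ_{t=1}^{T} 2 · Σ_{a ∈ S⁽ᵗ⁾} √( 2 log T / N⁽ᵗ⁾(a) ) ≤ 2 |A| √(8 T log T). -/
import Mathlib

open Finset

private lemma inv_sqrt_step (k : ℕ) :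
    (Real.sqrt (k + 1))⁻¹ + 2 * Real.sqrt k ≤ 2 * Real.sqrt (k + 1) := by
  have hx : (0:ℝ) ≤ Real.sqrt k := Real.sqrt_nonneg _
  have hy : (0:ℝ) < Real.sqrt (k + 1) := Real.sqrt_pos.mpr (by positivity)
  have hx2 : Real.sqrt k ^ 2 = k := Real.sq_sqrt (by positivity)
  have hy2 : Real.sqrt (k + 1) ^ 2 = (k : ℝ) + 1 := Real.sq_sqrt (by positivity)
  have h1 : Real.sqrt (k + 1) * (Real.sqrt (k + 1))⁻¹ = 1 :=
    mul_inv_cancel₀ hy.ne'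
  nlinarith [sq_nonneg (Real.sqrt k - Real.sqrt (k + 1)), inv_nonneg.mpr hy.le]

private lemma aux_sum {α : Type*} [DecidableEq α] (S : ℕ → Finset α) (a : α) :
    ∀ n : ℕ,
      ∑ t ∈ (Finset.Icc 1 n).filter (fun t => a ∈ S t),
        (Real.sqrt (((Finset.Icc 1 t).filter (fun s => a ∈ S s)).card))⁻¹
        ≤ 2 * Real.sqrt (((Finset.Icc 1 n).filter (fun s => a ∈ S s)).card) := by
  intro n
  induction n with
  | zero => simp
  | succ n ih =>
    have hIcc : Finset.Icc 1 (n + 1) = insert (n + 1) (Finset.Icc 1 n) :=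
      (Finset.insert_Icc_right_eq_Icc_add_one (by omega)).symm
    by_cases h : a ∈ S (n + 1)
    · have hnot : n + 1 ∉ (Finset.Icc 1 n).filter (fun t => a ∈ S t) := by
        simp [Finset.mem_filter]
      have hfil : (Finset.Icc 1 (n+1)).filter (fun t => a ∈ S t)
          = insert (n + 1) ((Finset.Icc 1 n).filter (fun t => a ∈ S t)) := by
        rw [hIcc, Finset.filter_insert, if_pos h]
      have hcard : (((Finset.Icc 1 (n+1)).filter (fun s => a ∈ S s)).card : ℝ)
          = ((Finset.Icc 1 n).filter (fun s => a ∈ S s)).card + 1 := by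
        rw [hfil, Finset.card_insert_of_notMem hnot]
        push_cast; ring
      rw [hfil, Finset.sum_insert hnot, Finset.card_insert_of_notMem hnot]
      have h2 := inv_sqrt_step (((Finset.Icc 1 n).filter (fun s => a ∈ S s)).card)
      push_cast at h2 hcard ⊢
      rw [hcard]
      linarith [ih]
    · have hfil : (Finset.Icc 1 (n+1)).filter (fun t => a ∈ S t)
          = (Finset.Icc 1 n).filter (fun t => a ∈ S t) := by
        rw [hIcc, Finset.filter_insert, if_neg h]
      rw [hfil]
      exact ih

/-- pathwise confidence-width bound (Lemma 3). With
`N t a = #{s ∈ [1,t] : a ∈ S s}` (so `N t a ≥ 1` when `a ∈ S t`),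
`∑_{t=1}^{T} 2 ∑_{a ∈ S t} √(2 log T / N t a) ≤ 2 |A| √(8 T log T)`. -/
theorem confidence_width_sum_le
    {α : Type*} [DecidableEq α] (A : Finset α) (hA : A.Nonempty) (T : ℕ) (hT : 1 ≤ T)
    (S : ℕ → Finset α) (hS : ∀ t ∈ Finset.Icc 1 T, S t ⊆ A)
    (N : ℕ → α → ℕ)
    (hN : ∀ t, ∀ a, N t a = ((Finset.Icc 1 t).filter (fun s => a ∈ S s)).card) :
    ∑ t ∈ Finset.Icc 1 T, 2 * ∑ a ∈ S t, Real.sqrt (2 * Real.log T / N t a) ≤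
      2 * (A.card : ℝ) * Real.sqrt (8 * T * Real.log T) := by
  have hlog : 0 ≤ Real.log T := Real.log_nonneg (by exact_mod_cast hT)
  set c := Real.sqrt (2 * Real.log T) with hc
  have hc0 : 0 ≤ c := Real.sqrt_nonneg _
  -- rewrite each summand
  have hrw : ∀ t a, Real.sqrt (2 * Real.log T / N t a)
      = c * (Real.sqrt (N t a))⁻¹ := by
    intro t a
    rw [Real.sqrt_div (by positivity), div_eq_mul_inv]
  have key : ∑ t ∈ Finset.Icc 1 T, 2 * ∑ a ∈ S t, Real.sqrt (2 * Real.log T / N t a)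
      = 2 * c * ∑ t ∈ Finset.Icc 1 T, ∑ a ∈ A,
          if a ∈ S t then (Real.sqrt (N t a))⁻¹ else 0 := by
    rw [Finset.mul_sum]
    refine Finset.sum_congr rfl (fun t ht => ?_)
    rw [← Finset.sum_filter]
    have : A.filter (fun a => a ∈ S t) = S t := by
      rw [Finset.filter_mem_eq_inter]
      exact Finset.inter_eq_right.mpr (hS t ht)
    rw [this, Finset.mul_sum, Finset.mul_sum]
    refine Finset.sum_congr rfl (fun a _ => ?_)
    rw [hrw t a]; ring
  rw [key, Finset.sum_comm]
  have hbound : ∑ a ∈ A, ∑ t ∈ Finset.Icc 1 T,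
      (if a ∈ S t then (Real.sqrt (N t a))⁻¹ else 0)
      ≤ (A.card : ℝ) * (2 * Real.sqrt T) := by
    have : ∀ a ∈ A, (∑ t ∈ Finset.Icc 1 T, if a ∈ S t then (Real.sqrt (N t a))⁻¹ else 0)
        ≤ 2 * Real.sqrt T := by
      intro a _
      rw [← Finset.sum_filter]
      have h1 : ∑ t ∈ (Finset.Icc 1 T).filter (fun t => a ∈ S t),
          (Real.sqrt (N t a))⁻¹
          ≤ 2 * Real.sqrt (((Finset.Icc 1 T).filter (fun s => a ∈ S s)).card) := by
        have := aux_sum S a T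
        simpa [hN] using this
      refine h1.trans ?_
      have h2 : (((Finset.Icc 1 T).filter (fun s => a ∈ S s)).card : ℝ) ≤ T := by
        have := Finset.card_filter_le (Finset.Icc 1 T) (fun s => a ∈ S s)
        have hcard : (Finset.Icc 1 T).card = T := by
          rw [Nat.card_Icc]; omega
        exact_mod_cast hcard ▸ this
      have := Real.sqrt_le_sqrt h2
      linarith
    calc ∑ a ∈ A, ∑ t ∈ Finset.Icc 1 T,
          (if a ∈ S t then (Real.sqrt (N t a))⁻¹ else 0)
        ≤ ∑ _a ∈ A, 2 * Real.sqrt T := Finset.sum_le_sum this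
      _ = (A.card : ℝ) * (2 * Real.sqrt T) := by
          rw [Finset.sum_const, nsmul_eq_mul]
  have hfin : Real.sqrt (8 * T * Real.log T) = 2 * Real.sqrt T * c := by
    rw [hc, show (8:ℝ) * T * Real.log T = (4 * T) * (2 * Real.log T) by ring,
      Real.sqrt_mul (by positivity), show (4:ℝ) * T = (2 * Real.sqrt T)^2 by
        rw [mul_pow, Real.sq_sqrt (by positivity)]; norm_num,
      Real.sqrt_sq (by positivity)]
  rw [hfin]
  calc 2 * c * ∑ a ∈ A, ∑ t ∈ Finset.Icc 1 T,
        (if a ∈ S t then (Real.sqrt (N t a))⁻¹ else 0)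
      ≤ 2 * c * ((A.card : ℝ) * (2 * Real.sqrt T)) := by
        refine mul_le_mul_of_nonneg_left hbound (by positivity)
    _ = 2 * (A.card : ℝ) * (2 * Real.sqrt T * c) := by ring
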